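/- (Second BRAIN theorem, finite form) Let α be an irrational real number and N a positive integer. Then there exists a unique integer q₀ with 1 ≤ q₀ ≤ N such that for every integer q with 1 ≤ q ≤ N, ‖q₀·α‖ ≤ ‖q·α‖. Moreover, round(q₀·α) and q₀ are coprime, and for all integers p and q with 1 ≤ q ≤ N one has |q₀·α - round (q₀·α)| ≤ |q·α - p|. -/

import Mathlib

theorem second_brain_theorem (α : ℝ) (hα : Irrational α) (N : ℤ) (hN : 1 ≤ N) :
    (∃! q₀ : ℤ, 1 ≤ q₀ ∧ q₀ ≤ N ∧
      ∀ q : ℤ, 1 ≤ q → q ≤ N →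
        |(q₀ : ℝ) * α - (round ((q₀ : ℝ) * α) : ℝ)| ≤ |(q : ℝ) * α - (round ((q : ℝ) * α) : ℝ)|) ∧
    ∀ q₀ : ℤ, (1 ≤ q₀ ∧ q₀ ≤ N ∧
      ∀ q : ℤ, 1 ≤ q → q ≤ N →
        |(q₀ : ℝ) * α - (round ((q₀ : ℝ) * α) : ℝ)| ≤ |(q : ℝ) * α - (round ((q : ℝ) * α) : ℝ)|) →
      IsCoprime (round ((q₀ : ℝ) * α)) q₀ ∧
        ∀ p q : ℤ, 1 ≤ q → q ≤ N →
          |(q₀ : ℝ) * α - (round ((q₀ : ℝ) * α) : ℝ)| ≤ |(q : ℝ) * α - (p : ℝ)| := by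
  set f : ℤ → ℝ := fun q => |(q : ℝ) * α - (round ((q : ℝ) * α) : ℝ)| with hf
  have fpos : ∀ q : ℤ, q ≠ 0 → 0 < f q := by
    intro q hq
    have hirr : Irrational ((q : ℝ) * α) := hα.intCast_mul hq
    have hne : ((q : ℝ) * α) ≠ (round ((q : ℝ) * α) : ℝ) := hirr.ne_int _
    simpa [hf] using abs_pos.mpr (sub_ne_zero.mpr hne)
  have finj : ∀ q₁ q₂ : ℤ, 1 ≤ q₁ → 1 ≤ q₂ → f q₁ = f q₂ → q₁ = q₂ := by
    intro q₁ q₂ h1 h2 hfe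
    by_contra hne
    rcases abs_eq_abs.mp hfe with h | h
    · have hne2 : (q₁ - q₂ : ℤ) ≠ 0 := sub_ne_zero.mpr hne
      exact (hα.intCast_mul hne2).ne_int
        ((round ((q₁ : ℝ) * α)) - (round ((q₂ : ℝ) * α))) (by push_cast; linarith)
    · have hne2 : (q₁ + q₂ : ℤ) ≠ 0 := by omega
      exact (hα.intCast_mul hne2).ne_int
        ((round ((q₁ : ℝ) * α)) + (round ((q₂ : ℝ) * α))) (by push_cast; linarith)
  obtain ⟨q₀, hmem, hmin⟩ := Finset.exists_min_image (Finset.Icc 1 N) f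
    ⟨1, Finset.mem_Icc.mpr ⟨le_refl 1, hN⟩⟩
  obtain ⟨hq1, hq2⟩ := Finset.mem_Icc.mp hmem
  constructor
  · refine ⟨q₀, ⟨hq1, hq2, fun q h1 h2 => hmin q (Finset.mem_Icc.mpr ⟨h1, h2⟩)⟩, ?_⟩
    rintro y ⟨hy1, hy2, hymin⟩
    exact finj y q₀ hy1 hq1 (le_antisymm (hymin q₀ hq1 hq2)
      (hmin y (Finset.mem_Icc.mpr ⟨hy1, hy2⟩)))
  · rintro q₀' ⟨h1, h2, hmin'⟩
    have hq0 : q₀' ≠ 0 := by omega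
    constructor
    · rw [Int.isCoprime_iff_gcd_eq_one]
      by_contra hg
      set p₀ := round ((q₀' : ℝ) * α) with hp₀
      set g : ℤ := (Int.gcd p₀ q₀' : ℤ) with hgdef
      have hg0 : g ≠ 0 := by
        simp only [hgdef, Ne, Int.natCast_eq_zero, Int.gcd_eq_zero_iff]
        rintro ⟨-, h⟩; exact hq0 h
      have hg2 : 2 ≤ g := by
        have : 0 ≤ g := Int.natCast_nonneg _
        have : g ≠ 1 := by
          intro h; rw [hgdef] at h; exact hg (by exact_mod_cast h)
        omega
      obtain ⟨q', hq'⟩ : g ∣ q₀' := Int.gcd_dvd_right _ _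
      obtain ⟨p', hp'⟩ : g ∣ p₀ := Int.gcd_dvd_left _ _
      have hq'1 : 1 ≤ q' := by nlinarith
      have hq'N : q' ≤ N := by nlinarith
      have key : (q₀' : ℝ) * α - (p₀ : ℝ) = (g : ℝ) * ((q' : ℝ) * α - (p' : ℝ)) := by
        rw [hq', hp']; push_cast; ring
      have habs : f q₀' = (g : ℝ) * |(q' : ℝ) * α - (p' : ℝ)| := by
        rw [hf]; simp only [← hp₀, key, abs_mul]
        congr 1
        rw [abs_of_nonneg]; positivity
      have hlt : |(q' : ℝ) * α - (p' : ℝ)| < f q₀' := by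
        have hpos := fpos q₀' hq0
        have hgR : (2 : ℝ) ≤ (g : ℝ) := by exact_mod_cast hg2
        nlinarith [abs_nonneg ((q' : ℝ) * α - (p' : ℝ))]
      have : f q' ≤ |(q' : ℝ) * α - (p' : ℝ)| := round_le ((q' : ℝ) * α) p'
      have hc := hmin' q' hq'1 hq'N
      change f q₀' ≤ f q' at hc
      linarith
    · intro p q h1q h2q
      have h1 : f q₀' ≤ f q := hmin' q h1q h2q
      have h2 : f q ≤ |(q : ℝ) * α - (p : ℝ)| := round_le ((q : ℝ) * α) p
      exact le_trans h1 h2
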